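/- Let X be a compact metric space, f : X → X continuous, s ∈ (0,1). Define for μ ∈ P(X), W_μ(s,r,n) = inf over finite (n,r)-generating sets E of Σ_{x∈E} g_{x,r,n}(μ)^s. Then μ ↦ W_μ(s,r,n) is upper-semicontinuous on P(X) with the weak topology, and consequently, for each r > 0, D(r) = {μ ∈ P(X) : liminf_{n→∞} log W_μ(s,r,n) / ((1−s)n) = 0} is a G_δ subset of P(X). -/

import Mathlib

open Metric

/-- The Bowen metric of order `n`: `d_n(x,y) = max{d(f^i x, f^i y) : 0 ≤ i < n}`. -/
noncomputable def bowenDist {X : Type*} [PseudoMetricSpace X] (f : X → X) (n : ℕ) (x y : X) : ℝ :=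
  (((Finset.range n).sup fun i => nndist (f^[i] x) (f^[i] y) : NNReal) : ℝ)

/-- The open Bowen ball of size `n` and radius `ε` centered at `x`. -/
def bowenBall {X : Type*} [PseudoMetricSpace X] (f : X → X) (n : ℕ) (x : X) (ε : ℝ) : Set X :=
  {y | bowenDist f n x y < ε}

/-- The piecewise-linear bump function of `d_n(x,·)` at levels `ε, 2ε`: equal to `1` when
`d_n(x,y) ≤ ε`, to `2 − d_n(x,y)/ε` when `ε ≤ d_n(x,y) ≤ 2ε`, and to `0` when
`d_n(x,y) ≥ 2ε`. -/
noncomputable def bowenBump {X : Type*} [PseudoMetricSpace X] (f : X → X) (n : ℕ) (ε : ℝ)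
    (x y : X) : ℝ :=
  max 0 (min 1 (2 - bowenDist f n x y / ε))

open MeasureTheory Filter

lemma bowenDist_zero {X : Type*} [PseudoMetricSpace X] (f : X → X) (x y : X) :
    bowenDist f 0 x y = 0 := by simp [bowenDist]

lemma bowenDist_succ {X : Type*} [PseudoMetricSpace X] (f : X → X) (n : ℕ) (x y : X) :
    bowenDist f (n+1) x y = max (bowenDist f n x y) (dist (f^[n] x) (f^[n] y)) := by
  unfold bowenDist
  rw [Finset.range_add_one, Finset.sup_insert]
  push_cast
  rw [max_comm]

lemma continuous_bowenDist {X : Type*} [PseudoMetricSpace X] {f : X → X} (hf : Continuous f)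
    (n : ℕ) (x : X) : Continuous fun y => bowenDist f n x y := by
  induction n with
  | zero => simp only [bowenDist_zero]; exact continuous_const
  | succ n ih =>
    simp only [bowenDist_succ]
    exact ih.max (continuous_const.dist (hf.iterate n))

lemma bowenDist_lt_iff {X : Type*} [PseudoMetricSpace X] {f : X → X} {n : ℕ} {x y : X} {r : ℝ}
    (hr : 0 < r) : bowenDist f n x y < r ↔ ∀ i < n, dist (f^[i] x) (f^[i] y) < r := by
  induction n with
  | zero => simp [bowenDist_zero, hr]
  | succ n ih =>
    rw [bowenDist_succ, max_lt_iff, ih]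
    constructor
    · rintro ⟨h1, h2⟩ i hi
      rcases Nat.lt_succ_iff_lt_or_eq.mp hi with h | h
      · exact h1 i h
      · subst h; exact h2
    · intro h
      exact ⟨fun i hi => h i (Nat.lt_succ_of_lt hi), h n (Nat.lt_succ_self n)⟩

lemma mem_bowenBall_self {X : Type*} [PseudoMetricSpace X] {f : X → X} {n : ℕ} {r : ℝ}
    (hr : 0 < r) (x : X) : x ∈ bowenBall f n x r :=
  (bowenDist_lt_iff hr).mpr (fun i _ => by simpa using hr)

lemma bowenBump_nonneg {X : Type*} [PseudoMetricSpace X] (f : X → X) (n : ℕ) (ε : ℝ) (x y : X) :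
    0 ≤ bowenBump f n ε x y := le_max_left _ _

lemma bowenBump_le_one {X : Type*} [PseudoMetricSpace X] (f : X → X) (n : ℕ) (ε : ℝ) (x y : X) :
    bowenBump f n ε x y ≤ 1 := max_le zero_le_one (min_le_left _ _)

lemma bowenBump_eq_one {X : Type*} [PseudoMetricSpace X] {f : X → X} {n : ℕ} {ε : ℝ}
    (hε : 0 < ε) {x y : X} (h : y ∈ bowenBall f n x ε) : bowenBump f n ε x y = 1 := by
  have hd : bowenDist f n x y / ε < 1 := (div_lt_one hε).mpr h
  have h0 : (0:ℝ) ≤ bowenDist f n x y / ε :=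
    div_nonneg (by unfold bowenDist; positivity) hε.le
  have : min 1 (2 - bowenDist f n x y / ε) = 1 := min_eq_left (by linarith)
  rw [bowenBump, this, max_eq_right zero_le_one]

lemma continuous_bowenBump {X : Type*} [PseudoMetricSpace X] {f : X → X} (hf : Continuous f)
    (n : ℕ) (ε : ℝ) (x : X) : Continuous fun y => bowenBump f n ε x y :=
  continuous_const.max (continuous_const.min
    (continuous_const.sub ((continuous_bowenDist hf n x).div_const ε)))

noncomputable def bumpBCF {X : Type*} [MetricSpace X] [CompactSpace X] {f : X → X}
    (hf : Continuous f) (n : ℕ) (ε : ℝ) (x : X) : BoundedContinuousFunction X ℝ :=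
  BoundedContinuousFunction.mkOfCompact ⟨fun y => bowenBump f n ε x y, continuous_bowenBump hf n ε x⟩

lemma integral_bump_nonneg {X : Type*} [MetricSpace X] [MeasurableSpace X]
    {f : X → X} (n : ℕ) (ε : ℝ) (x : X) (μ : Measure X) :
    0 ≤ ∫ y, bowenBump f n ε x y ∂μ :=
  integral_nonneg (fun y => bowenBump_nonneg f n ε x y)

lemma integral_bump_le_one {X : Type*} [MetricSpace X] [CompactSpace X] [MeasurableSpace X]
    [BorelSpace X] {f : X → X} (hf : Continuous f) (n : ℕ) (ε : ℝ) (x : X) (μ : Measure X)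
    [IsProbabilityMeasure μ] : ∫ y, bowenBump f n ε x y ∂μ ≤ 1 := by
  have h := integral_mono ((bumpBCF hf n ε x).integrable μ) (integrable_const 1)
    (fun y => bowenBump_le_one f n ε x y)
  have h' : ∫ y, bowenBump f n ε x y ∂μ ≤ ∫ _, (1:ℝ) ∂μ := h
  simpa using h'



/-- `W_μ(s,r,n)`: the infimum, over finite `(n,r)`-generating sets `E` of `X`, of
`Σ_{x∈E} g_{x,r,n}(μ)^s`. -/
noncomputable def Wfun {X : Type*} [MetricSpace X] [MeasurableSpace X]
    (f : X → X) (s r : ℝ) (n : ℕ) (μ : Measure X) : ℝ :=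
  ⨅ E : {E : Finset X // ∀ y : X, ∃ x ∈ E, y ∈ bowenBall f n x r},
    ∑ x ∈ (E : Finset X), (∫ y, bowenBump f n r x y ∂μ) ^ s


section W
variable {X : Type*} [MetricSpace X] [CompactSpace X] [MeasurableSpace X] [BorelSpace X]
  {f : X → X} (hf : Continuous f) {s r : ℝ}

lemma exists_generating (hf : Continuous f) (hr : 0 < r) (n : ℕ) :
    Nonempty {E : Finset X // ∀ y : X, ∃ x ∈ E, y ∈ bowenBall f n x r} := by
  have hopen : ∀ x : X, IsOpen (bowenBall f n x r) := fun x =>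
    isOpen_lt (continuous_bowenDist hf n x) continuous_const
  have hcov : (Set.univ : Set X) ⊆ ⋃ x : X, bowenBall f n x r := fun y _ =>
    Set.mem_iUnion.mpr ⟨y, mem_bowenBall_self hr y⟩
  obtain ⟨t, ht⟩ := isCompact_univ.elim_finite_subcover _ hopen hcov
  refine ⟨⟨t, fun y => ?_⟩⟩
  have := ht (Set.mem_univ y)
  simpa using this

lemma one_le_Wfun (hf : Continuous f) (hs : s ∈ Set.Ioo (0:ℝ) 1) (hr : 0 < r) (n : ℕ)
    (μ : Measure X) [IsProbabilityMeasure μ] : 1 ≤ Wfun f s r n μ := by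
  have : Nonempty {E : Finset X // ∀ y : X, ∃ x ∈ E, y ∈ bowenBall f n x r} :=
    exists_generating hf hr n
  refine le_ciInf fun E => ?_
  -- 1 ≤ ∑ (∫ bump)^s
  have key : (1:ℝ) ≤ ∑ x ∈ (E : Finset X), ∫ y, bowenBump f n r x y ∂μ := by
    have hint : ∀ x ∈ (E : Finset X), Integrable (fun y => bowenBump f n r x y) μ :=
      fun x _ => (bumpBCF hf n r x).integrable μ
    rw [← integral_finset_sum _ hint]
    have h1 : (1:ℝ) = ∫ _, (1:ℝ) ∂μ := by simp
    rw [h1]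
    refine integral_mono (integrable_const 1) (integrable_finset_sum _ hint) ?_
    intro y
    obtain ⟨x, hxE, hx⟩ := E.2 y
    calc (1:ℝ) = bowenBump f n r x y := (bowenBump_eq_one hr hx).symm
    _ ≤ ∑ x ∈ (E : Finset X), bowenBump f n r x y :=
      Finset.single_le_sum (fun i _ => bowenBump_nonneg f n r i y) hxE
  refine le_trans key (Finset.sum_le_sum fun x _ => ?_)
  rcases eq_or_lt_of_le (integral_bump_nonneg n r x μ) with h | h
  · rw [← h, Real.zero_rpow (ne_of_gt hs.1)]
  · calc ∫ y, bowenBump f n r x y ∂μ = (∫ y, bowenBump f n r x y ∂μ) ^ (1:ℝ) :=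
      (Real.rpow_one _).symm
    _ ≤ (∫ y, bowenBump f n r x y ∂μ) ^ s :=
      Real.rpow_le_rpow_of_exponent_ge h (integral_bump_le_one hf n r x μ) hs.2.le

end W

section W2
variable {X : Type*} [MetricSpace X] [CompactSpace X] [MeasurableSpace X] [BorelSpace X]
  {f : X → X} {s r : ℝ}

lemma continuous_S (hf : Continuous f) (hs : 0 < s) (n : ℕ) (E : Finset X) :
    Continuous fun μ : ProbabilityMeasure X =>
      ∑ x ∈ E, (∫ y, bowenBump f n r x y ∂(μ : Measure X)) ^ s := by
  refine continuous_finset_sum _ fun x _ => ?_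
  have h1 : Continuous fun μ : ProbabilityMeasure X =>
      ∫ y, bowenBump f n r x y ∂(μ : Measure X) :=
    ProbabilityMeasure.continuous_integral_boundedContinuousFunction (bumpBCF hf n r x)
  exact (Real.continuous_rpow_const hs.le).comp h1

lemma usc_Wfun (hf : Continuous f) (hs : s ∈ Set.Ioo (0:ℝ) 1) (hr : 0 < r) (n : ℕ) :
    UpperSemicontinuous fun μ : ProbabilityMeasure X => Wfun f s r n (μ : Measure X) := by
  intro μ0 y hy
  have hX : Nonempty X := by
    by_contra h
    rw [not_nonempty_iff] at h
    have h1 : (μ0 : Measure X) Set.univ = 1 := measure_univ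
    rw [Set.univ_eq_empty_iff.mpr h, measure_empty] at h1
    exact zero_ne_one h1
  have hne : Nonempty {E : Finset X // ∀ y : X, ∃ x ∈ E, y ∈ bowenBall f n x r} :=
    exists_generating hf hr n
  have hbdd : ∀ μ : ProbabilityMeasure X, BddBelow (Set.range fun
      E : {E : Finset X // ∀ y : X, ∃ x ∈ E, y ∈ bowenBall f n x r} =>
      ∑ x ∈ (E : Finset X), (∫ y, bowenBump f n r x y ∂(μ : Measure X)) ^ s) := by
    intro μ
    refine ⟨0, ?_⟩
    rintro v ⟨E, rfl⟩
    exact Finset.sum_nonneg fun x _ => Real.rpow_nonneg (integral_bump_nonneg n r x _) s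
  obtain ⟨E, hE⟩ := exists_lt_of_ciInf_lt hy
  have hev : ∀ᶠ μ : ProbabilityMeasure X in nhds μ0, (∑ x ∈ (E : Finset X),
      (∫ y, bowenBump f n r x y ∂(μ : Measure X)) ^ s) < y :=
    ((continuous_S hf hs.1 n (E : Finset X)).continuousAt).eventually_lt_const hE
  filter_upwards [hev] with μ hμ
  exact lt_of_le_of_lt (ciInf_le (hbdd μ) E) hμ

end W2

lemma usc_log_div {α : Type*} [TopologicalSpace α] {g : α → ℝ} (hg : UpperSemicontinuous g)
    (h1 : ∀ x, 1 ≤ g x) {c : ℝ} (hc : 0 < c) :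
    UpperSemicontinuous fun x => Real.log (g x) / c := by
  intro x y hy
  have hgx : (0:ℝ) < g x := lt_of_lt_of_le one_pos (h1 x)
  have h2 : g x < Real.exp (y * c) := by
    have hlt : Real.log (g x) < y * c := (div_lt_iff₀ hc).mp hy
    calc g x = Real.exp (Real.log (g x)) := (Real.exp_log hgx).symm
      _ < Real.exp (y * c) := Real.exp_lt_exp.mpr hlt
  filter_upwards [hg x _ h2] with z hz
  rw [div_lt_iff₀ hc]
  calc Real.log (g z) < Real.log (Real.exp (y * c)) :=
        Real.log_lt_log (lt_of_lt_of_le one_pos (h1 z)) hz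
    _ = y * c := Real.log_exp _

lemma liminf_eq_zero_iff {a : ℕ → ℝ} (h0 : ∀ n, 0 ≤ a n) {C : ℝ} (hC : ∀ n, a n ≤ C) :
    liminf a atTop = 0 ↔ ∀ k : ℕ, ∀ N : ℕ, ∃ n, N ≤ n ∧ a n < 1/((k:ℝ)+1) := by
  have hbddA : IsBoundedUnder (· ≤ ·) atTop a := isBoundedUnder_of ⟨C, hC⟩
  have hbddB : IsBoundedUnder (· ≥ ·) atTop a := isBoundedUnder_of ⟨0, h0⟩
  have hge : 0 ≤ liminf a atTop :=
    le_liminf_of_le hbddA.isCoboundedUnder_ge (Eventually.of_forall h0)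
  constructor
  · intro h k N
    have hpos : (0:ℝ) < 1/((k:ℝ)+1) := by positivity
    have hfreq : ∃ᶠ n in atTop, a n < 1/((k:ℝ)+1) :=
      frequently_lt_of_liminf_lt hbddA.isCoboundedUnder_ge (by rw [h]; exact hpos)
    obtain ⟨n, hn, hn'⟩ := (frequently_atTop.mp hfreq) N
    exact ⟨n, hn, hn'⟩
  · intro h
    refine le_antisymm ?_ hge
    have key : ∀ k : ℕ, liminf a atTop ≤ 1/((k:ℝ)+1) := by
      intro k
      refine liminf_le_of_frequently_le ?_ hbddB
      refine frequently_atTop.mpr fun N => ?_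
      obtain ⟨n, hn, hn'⟩ := h k N
      exact ⟨n, hn, hn'.le⟩
    exact ge_of_tendsto' tendsto_one_div_add_atTop_nhds_zero_nat key

lemma Wfun_le {X : Type*} [MetricSpace X] [CompactSpace X] [MeasurableSpace X] [BorelSpace X]
    {f : X → X} {s r : ℝ} (hf : Continuous f) (hs : s ∈ Set.Ioo (0:ℝ) 1) (hr : 0 < r)
    [Nonempty X] :
    ∃ K : ℕ, 1 ≤ K ∧ ∀ (n : ℕ) (μ : ProbabilityMeasure X),
      Wfun f s r n (μ : Measure X) ≤ (K : ℝ) ^ n := by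
  classical
  have hr4 : 0 < r/4 := by linarith
  obtain ⟨F, hFsub⟩ := isCompact_univ.elim_finite_subcover (fun x : X => ball x (r/4))
    (fun _ => isOpen_ball) (fun y _ => Set.mem_iUnion.mpr ⟨y, mem_ball_self hr4⟩)
  have hF : ∀ y : X, ∃ x ∈ F, dist y x < r/4 := by
    intro y
    have := hFsub (Set.mem_univ y)
    simpa [mem_ball] using this
  refine ⟨F.card, ?_, ?_⟩
  · obtain ⟨x, hx, _⟩ := hF (Classical.arbitrary X)
    exact Finset.card_pos.mpr ⟨x, hx⟩
  intro n μ
  let σ : (Fin n → X) → X := fun w =>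
    if h : ∃ z : X, ∀ i : Fin n, dist (f^[(i:ℕ)] z) (w i) < r/4 then h.choose
    else Classical.arbitrary X
  have hσ : ∀ w : Fin n → X, (∃ z : X, ∀ i : Fin n, dist (f^[(i:ℕ)] z) (w i) < r/4) →
      ∀ i : Fin n, dist (f^[(i:ℕ)] (σ w)) (w i) < r/4 := by
    intro w h
    simp only [σ, dif_pos h]
    exact h.choose_spec
  let E : Finset X := Finset.image (fun w : Fin n → F => σ (fun i => (w i : X))) Finset.univ
  have hgen : ∀ y : X, ∃ x ∈ E, y ∈ bowenBall f n x r := by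
    intro y
    have hw : ∀ i : Fin n, ∃ x ∈ F, dist (f^[(i:ℕ)] y) x < r/4 := fun i => hF _
    choose w hwF hwd using hw
    have hex : ∃ z : X, ∀ i : Fin n, dist (f^[(i:ℕ)] z) (w i) < r/4 := ⟨y, hwd⟩
    refine ⟨σ w, ?_, ?_⟩
    · exact Finset.mem_image.mpr ⟨fun i => ⟨w i, hwF i⟩, Finset.mem_univ _, rfl⟩
    · refine (bowenDist_lt_iff hr).mpr fun i hi => ?_
      have h1 := hσ w hex ⟨i, hi⟩
      have h2 := hwd ⟨i, hi⟩
      calc dist (f^[i] (σ w)) (f^[i] y)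
          ≤ dist (f^[i] (σ w)) (w ⟨i, hi⟩) + dist (f^[i] y) (w ⟨i, hi⟩) :=
            dist_triangle_right _ _ _
        _ < r/4 + r/4 := add_lt_add h1 h2
        _ < r := by linarith
  have hbdd : BddBelow (Set.range fun
      E : {E : Finset X // ∀ y : X, ∃ x ∈ E, y ∈ bowenBall f n x r} =>
      ∑ x ∈ (E : Finset X), (∫ y, bowenBump f n r x y ∂(μ : Measure X)) ^ s) := by
    refine ⟨0, ?_⟩
    rintro v ⟨E, rfl⟩
    exact Finset.sum_nonneg fun x _ => Real.rpow_nonneg (integral_bump_nonneg n r x _) s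
  have h1 : Wfun f s r n (μ : Measure X) ≤
      ∑ x ∈ E, (∫ y, bowenBump f n r x y ∂(μ : Measure X)) ^ s :=
    ciInf_le hbdd ⟨E, hgen⟩
  have h2 : ∑ x ∈ E, (∫ y, bowenBump f n r x y ∂(μ : Measure X)) ^ s ≤ (E.card : ℝ) := by
    have := Finset.sum_le_card_nsmul E
      (fun x => (∫ y, bowenBump f n r x y ∂(μ : Measure X)) ^ s) 1
      (fun x _ => Real.rpow_le_one (integral_bump_nonneg n r x _)
        (integral_bump_le_one hf n r x _) hs.1.le)
    simpa using this
  have h3 : (E.card : ℝ) ≤ (F.card : ℝ) ^ n := by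
    have hE : E.card ≤ F.card ^ n := by
      calc E.card ≤ (Finset.univ : Finset (Fin n → F)).card := Finset.card_image_le
        _ = F.card ^ n := by simp [Finset.card_univ, Fintype.card_fun, Fintype.card_coe]
    exact_mod_cast hE
  calc Wfun f s r n (μ : Measure X) ≤ (E.card : ℝ) := h1.trans h2
    _ ≤ (F.card : ℝ) ^ n := h3


theorem stmt16 {X : Type*} [MetricSpace X] [CompactSpace X] [MeasurableSpace X] [BorelSpace X]
    (f : X → X) (hf : Continuous f) (s : ℝ) (hs : s ∈ Set.Ioo (0 : ℝ) 1) :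
    (∀ r > (0 : ℝ), ∀ n : ℕ,
        UpperSemicontinuous fun μ : ProbabilityMeasure X => Wfun f s r n (μ : Measure X)) ∧
      ∀ r > (0 : ℝ),
        IsGδ {μ : ProbabilityMeasure X |
          liminf (fun n : ℕ =>
            Real.log (Wfun f s r n (μ : Measure X)) / ((1 - s) * n)) atTop = 0} := by
  have hs1 : (0:ℝ) < 1 - s := by have := hs.2; linarith
  refine ⟨fun r hr n => usc_Wfun hf hs hr n, fun r hr => ?_⟩
  by_cases hX : Nonempty X
  swap
  · rw [not_nonempty_iff] at hX
    have hPM : IsEmpty (ProbabilityMeasure X) := by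
      refine ⟨fun μ => ?_⟩
      have h1 : (μ : Measure X) Set.univ = 1 := measure_univ
      rw [Set.univ_eq_empty_iff.mpr hX, measure_empty] at h1
      exact zero_ne_one h1
    have : {μ : ProbabilityMeasure X |
        liminf (fun n : ℕ =>
          Real.log (Wfun f s r n (μ : Measure X)) / ((1 - s) * n)) atTop = 0} = ∅ :=
      Set.eq_empty_of_isEmpty _
    rw [this]
    exact IsGδ.empty
  obtain ⟨K, hK1, hKW⟩ := Wfun_le hf hs hr
  set A : ℕ → ProbabilityMeasure X → ℝ :=
    fun n μ => Real.log (Wfun f s r n (μ : Measure X)) / ((1 - s) * n) with hA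
  have hK0 : (0:ℝ) ≤ Real.log K := Real.log_nonneg (by exact_mod_cast hK1)
  set C : ℝ := Real.log K / (1 - s) with hC
  have hCpos : 0 ≤ C := div_nonneg hK0 hs1.le
  have hW1 : ∀ (n : ℕ) (μ : ProbabilityMeasure X), 1 ≤ Wfun f s r n (μ : Measure X) :=
    fun n μ => one_le_Wfun hf hs hr n _
  have h0 : ∀ (μ : ProbabilityMeasure X) (n : ℕ), 0 ≤ A n μ := by
    intro μ n
    rcases Nat.eq_zero_or_pos n with h | h
    · subst h; simp [hA]
    · exact div_nonneg (Real.log_nonneg (hW1 n μ))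
        (mul_nonneg hs1.le (Nat.cast_nonneg n))
  have hCb : ∀ (μ : ProbabilityMeasure X) (n : ℕ), A n μ ≤ C := by
    intro μ n
    rcases Nat.eq_zero_or_pos n with h | h
    · subst h; simpa [hA] using hCpos
    · have hn : (0:ℝ) < (n:ℝ) := by exact_mod_cast h
      have hlog : Real.log (Wfun f s r n (μ : Measure X)) ≤ (n:ℝ) * Real.log K := by
        calc Real.log (Wfun f s r n (μ : Measure X)) ≤ Real.log ((K:ℝ)^n) :=
          Real.log_le_log (lt_of_lt_of_le one_pos (hW1 n μ)) (hKW n μ)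
        _ = (n:ℝ) * Real.log K := by rw [Real.log_pow]
      have hd : (0:ℝ) < (1 - s) * n := mul_pos hs1 hn
      calc A n μ = Real.log (Wfun f s r n (μ : Measure X)) / ((1 - s) * n) := rfl
        _ ≤ ((n:ℝ) * Real.log K) / ((1 - s) * n) := by gcongr
        _ = C := by rw [hC]; field_simp
  have hset : {μ : ProbabilityMeasure X |
      liminf (fun n : ℕ =>
        Real.log (Wfun f s r n (μ : Measure X)) / ((1 - s) * n)) atTop = 0} =
      ⋂ (k : ℕ), ⋂ (N : ℕ), ⋃ (n : ℕ), ⋃ (_ : N ≤ n),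
        {μ : ProbabilityMeasure X | A n μ < 1/((k:ℝ)+1)} := by
    ext μ
    simp only [Set.mem_setOf_eq, Set.mem_iInter, Set.mem_iUnion]
    rw [show (fun n : ℕ => Real.log (Wfun f s r n (μ : Measure X)) / ((1 - s) * n)) =
      fun n => A n μ from rfl]
    rw [liminf_eq_zero_iff (h0 μ) (hCb μ)]
    constructor
    · intro h k N; obtain ⟨n, hn, hn'⟩ := h k N; exact ⟨n, hn, hn'⟩
    · intro h k N; obtain ⟨n, hn, hn'⟩ := h k N; exact ⟨n, hn, hn'⟩
  rw [hset]
  refine IsGδ.iInter fun k => IsGδ.iInter fun N => IsOpen.isGδ ?_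
  refine isOpen_iUnion fun n => isOpen_iUnion fun _ => ?_
  rcases Nat.eq_zero_or_pos n with h | h
  · subst h
    have : {μ : ProbabilityMeasure X | A 0 μ < 1/((k:ℝ)+1)} = Set.univ := by
      ext μ
      simp only [Set.mem_setOf_eq, Set.mem_univ, iff_true, hA]
      simp
      positivity
    rw [this]; exact isOpen_univ
  · have hn : (0:ℝ) < (n:ℝ) := by exact_mod_cast h
    have husc : UpperSemicontinuous fun μ : ProbabilityMeasure X =>
        Real.log (Wfun f s r n (μ : Measure X)) / ((1 - s) * n) :=
      usc_log_div (usc_Wfun hf hs hr n) (hW1 n) (mul_pos hs1 hn)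
    exact husc.isOpen_preimage (1/((k:ℝ)+1))
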